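/- Let γ ∈ (0,1) and let T₁, T₂ be independent random variables with P(T₁ = t) = (1-γ)γ^t and P(T₂ = τ) = (1-√γ)(√γ)^τ for t, τ ∈ ℕ. Let f : ℕ × ℕ → ℝ be bounded. Then E[ Σ_{τ=0}^{T₂} γ^{τ/2} f(T₁, τ) ] = (1-γ) Σ_{t=0}^∞ γ^t Σ_{τ=0}^∞ γ^τ f(t, τ). -/

import Mathlib

set_option maxHeartbeats 1000000 in
/-- For independent `T₁ ~ Geom(1-γ)` and `T₂ ~ Geom(1-√γ)` on ℕ and
bounded `f : ℕ × ℕ → ℝ`,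
`E[Σ_{τ=0}^{T₂} γ^{τ/2} f(T₁,τ)] = (1-γ) Σ_t γ^t Σ_τ γ^τ f(t,τ)`. -/
theorem stmt_16 (γ : ℝ) (hγ : γ ∈ Set.Ioo (0:ℝ) 1)
    (f : ℕ → ℕ → ℝ) (C : ℝ) (hC : 0 < C) (hf : ∀ t τ, |f t τ| ≤ C) :
    ∑' p : ℕ × ℕ,
        ((1 - γ) * γ ^ p.1) * ((1 - Real.sqrt γ) * (Real.sqrt γ) ^ p.2) *
          (∑ τ ∈ Finset.range (p.2 + 1), (Real.sqrt γ) ^ τ * f p.1 τ) =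
      (1 - γ) * ∑' t : ℕ, γ ^ t * ∑' τ : ℕ, γ ^ τ * f t τ := by
  obtain ⟨hγ0, hγ1⟩ := hγ
  set s := Real.sqrt γ with hsdef
  have hs0 : 0 < s := Real.sqrt_pos.mpr hγ0
  have hs1 : s < 1 := by
    have := Real.sqrt_lt_sqrt hγ0.le hγ1
    simpa using this
  have hss : s * s = γ := Real.mul_self_sqrt hγ0.le
  have hs1' : (0:ℝ) < 1 - s := by linarith
  have hgs : Summable fun n : ℕ => s ^ n := summable_geometric_of_lt_one hs0.le hs1
  have hgγ : Summable fun n : ℕ => γ ^ n := summable_geometric_of_lt_one hγ0.le hγ1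
  -- bound for partial geometric sums
  have hpart : ∀ n : ℕ, ∑ i ∈ Finset.range n, s ^ i ≤ (1 - s)⁻¹ := by
    intro n
    have := hgs.sum_le_tsum (Finset.range n) (fun i _ => pow_nonneg hs0.le i)
    rwa [tsum_geometric_of_lt_one hs0.le hs1] at this
  -- bound for the inner finite sum
  have hS : ∀ t n : ℕ, |∑ τ ∈ Finset.range n, s ^ τ * f t τ| ≤ C * (1 - s)⁻¹ := by
    intro t n
    calc |∑ τ ∈ Finset.range n, s ^ τ * f t τ|
        ≤ ∑ τ ∈ Finset.range n, |s ^ τ * f t τ| := Finset.abs_sum_le_sum_abs _ _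
      _ ≤ ∑ τ ∈ Finset.range n, s ^ τ * C := by
          refine Finset.sum_le_sum fun i _ => ?_
          rw [abs_mul, abs_pow, abs_of_nonneg hs0.le]
          exact mul_le_mul_of_nonneg_left (hf t i) (pow_nonneg hs0.le i)
      _ = (∑ τ ∈ Finset.range n, s ^ τ) * C := by rw [← Finset.sum_mul]
      _ ≤ (1 - s)⁻¹ * C := mul_le_mul_of_nonneg_right (hpart n) hC.le
      _ = C * (1 - s)⁻¹ := mul_comm _ _
  -- geometric tail sum
  have tail : ∀ τ : ℕ, ∑' τ₂ : ℕ, (if τ ≤ τ₂ then s ^ τ₂ else 0) = s ^ τ * (1 - s)⁻¹ := by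
    intro τ
    have hinj : Function.Injective (fun n : ℕ => n + τ) := add_left_injective τ
    have hsupp : Function.support (fun τ₂ : ℕ => if τ ≤ τ₂ then s ^ τ₂ else (0:ℝ))
        ⊆ Set.range (fun n : ℕ => n + τ) := by
      intro x hx
      simp only [Function.mem_support] at hx
      rcases le_or_gt τ x with hge | hlt
      · exact ⟨x - τ, Nat.sub_add_cancel hge⟩
      · exact (hx (if_neg (not_le.mpr hlt))).elim
    rw [← hinj.tsum_eq hsupp]
    have heq : ∀ n : ℕ, (if τ ≤ n + τ then s ^ (n + τ) else (0:ℝ)) = s ^ n * s ^ τ := by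
      intro n
      rw [if_pos (Nat.le_add_left τ n), pow_add]
    rw [tsum_congr heq, tsum_mul_right, tsum_geometric_of_lt_one hs0.le hs1]
    ring
  -- the inner identity for each fixed t
  have inner : ∀ t : ℕ,
      ∑' τ₂ : ℕ, (1 - s) * s ^ τ₂ * ∑ τ ∈ Finset.range (τ₂ + 1), s ^ τ * f t τ
        = ∑' τ : ℕ, γ ^ τ * f t τ := by
    intro t
    set h : ℕ → ℕ → ℝ := fun τ₂ τ =>
      (1 - s) * s ^ τ₂ * (if τ ≤ τ₂ then s ^ τ * f t τ else 0) with hhdef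
    have hsum : Summable (Function.uncurry h) := by
      apply Summable.of_norm_bounded
        (g := fun p : ℕ × ℕ => ((1 - s) * C * s ^ p.1) * s ^ p.2)
      · exact Summable.mul_of_nonneg (hgs.mul_left _) hgs
          (fun n => by positivity) (fun n => by positivity)
      · rintro ⟨τ₂, τ⟩
        simp only [Function.uncurry, hhdef, Real.norm_eq_abs]
        split_ifs with hle
        · rw [abs_mul, abs_mul, abs_mul, abs_pow, abs_pow,
            abs_of_nonneg hs1'.le, abs_of_nonneg hs0.le]
          calc (1 - s) * s ^ τ₂ * (s ^ τ * |f t τ|)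
              ≤ (1 - s) * s ^ τ₂ * (s ^ τ * C) := by
                refine mul_le_mul_of_nonneg_left ?_ (by positivity)
                exact mul_le_mul_of_nonneg_left (hf t τ) (by positivity)
            _ = (1 - s) * C * s ^ τ₂ * s ^ τ := by ring
        · simp only [mul_zero, abs_zero]
          positivity
    have step1 : ∀ τ₂ : ℕ,
        (1 - s) * s ^ τ₂ * ∑ τ ∈ Finset.range (τ₂ + 1), s ^ τ * f t τ
          = ∑' τ : ℕ, h τ₂ τ := by
      intro τ₂
      rw [tsum_eq_sum (s := Finset.range (τ₂ + 1))
        (f := h τ₂) (by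
          intro b hb
          simp only [Finset.mem_range, not_lt] at hb
          simp only [hhdef]
          rw [if_neg (by omega), mul_zero])]
      rw [Finset.mul_sum]
      refine Finset.sum_congr rfl fun i hi => ?_
      simp only [Finset.mem_range] at hi
      simp only [hhdef]
      rw [if_pos (by omega)]
    have step2 : ∀ τ : ℕ, ∑' τ₂ : ℕ, h τ₂ τ = γ ^ τ * f t τ := by
      intro τ
      have : ∀ τ₂ : ℕ, h τ₂ τ
          = ((1 - s) * (s ^ τ * f t τ)) * (if τ ≤ τ₂ then s ^ τ₂ else 0) := by
        intro τ₂
        simp only [hhdef]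
        split_ifs <;> ring
      rw [tsum_congr this, tsum_mul_left, tail τ]
      have hpow : s ^ τ * s ^ τ = γ ^ τ := by
        rw [← mul_pow, hss]
      have hne : (1 - s) ≠ 0 := ne_of_gt hs1'
      rw [← hpow]
      field_simp
    calc ∑' τ₂ : ℕ, (1 - s) * s ^ τ₂ * ∑ τ ∈ Finset.range (τ₂ + 1), s ^ τ * f t τ
        = ∑' τ₂ : ℕ, ∑' τ : ℕ, h τ₂ τ := tsum_congr step1
      _ = ∑' τ : ℕ, ∑' τ₂ : ℕ, h τ₂ τ :=
          (hsum.tsum_comm' hsum.prod_factor hsum.prod_symm.prod_factor).symm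
      _ = ∑' τ : ℕ, γ ^ τ * f t τ := tsum_congr step2
  -- summability of the full double-indexed family
  have hmain : Summable (fun p : ℕ × ℕ =>
      ((1 - γ) * γ ^ p.1) * ((1 - s) * s ^ p.2) *
        (∑ τ ∈ Finset.range (p.2 + 1), s ^ τ * f p.1 τ)) := by
    apply Summable.of_norm_bounded
      (g := fun p : ℕ × ℕ => ((1 - γ) * γ ^ p.1) * (((1 - s) * (C * (1 - s)⁻¹)) * s ^ p.2))
    · exact Summable.mul_of_nonneg (hgγ.mul_left _) (hgs.mul_left _)
        (fun n => mul_nonneg (by linarith : (0:ℝ) ≤ 1 - γ) (pow_nonneg hγ0.le n))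
        (fun n => mul_nonneg (mul_nonneg hs1'.le
          (mul_nonneg hC.le (inv_nonneg.mpr hs1'.le))) (pow_nonneg hs0.le n))
    · rintro ⟨t, τ₂⟩
      simp only [Real.norm_eq_abs]
      rw [abs_mul, abs_mul, abs_mul, abs_mul, abs_pow, abs_pow,
        abs_of_nonneg (by linarith : (0:ℝ) ≤ 1 - γ), abs_of_nonneg hs1'.le,
        abs_of_nonneg hγ0.le, abs_of_nonneg hs0.le]
      calc (1 - γ) * γ ^ t * ((1 - s) * s ^ τ₂) * |∑ τ ∈ Finset.range (τ₂ + 1), s ^ τ * f t τ|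
          ≤ (1 - γ) * γ ^ t * ((1 - s) * s ^ τ₂) * (C * (1 - s)⁻¹) := by
            refine mul_le_mul_of_nonneg_left (hS t (τ₂ + 1))
              (mul_nonneg (mul_nonneg (by linarith : (0:ℝ) ≤ 1 - γ) (pow_nonneg hγ0.le t))
                (mul_nonneg hs1'.le (pow_nonneg hs0.le τ₂)))
        _ = (1 - γ) * γ ^ t * (((1 - s) * (C * (1 - s)⁻¹)) * s ^ τ₂) := by ring
  rw [hmain.tsum_prod' hmain.prod_factor]
  have : ∀ t : ℕ,
      ∑' τ₂ : ℕ, ((1 - γ) * γ ^ t) * ((1 - s) * s ^ τ₂) *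
          (∑ τ ∈ Finset.range (τ₂ + 1), s ^ τ * f t τ)
        = (1 - γ) * (γ ^ t * ∑' τ : ℕ, γ ^ τ * f t τ) := by
    intro t
    have harr : ∀ τ₂ : ℕ,
        ((1 - γ) * γ ^ t) * ((1 - s) * s ^ τ₂) *
            (∑ τ ∈ Finset.range (τ₂ + 1), s ^ τ * f t τ)
          = ((1 - γ) * γ ^ t) * ((1 - s) * s ^ τ₂ *
            (∑ τ ∈ Finset.range (τ₂ + 1), s ^ τ * f t τ)) := by
      intro τ₂; ring
    rw [tsum_congr harr, tsum_mul_left, inner t, mul_assoc]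
  rw [tsum_congr this, tsum_mul_left]
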